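/- Let p ∈ [1,2) and let u : Ω → ℝ be C² on an open set Ω ⊂ ℝⁿ. Then at every point where ∇u ≠ 0 and |∇u| is differentiable, |∇²u|² + 2(p−2)|∇|∇u||² + (p−2)² |(∇u/|∇u|)·(∇|∇u|)ᵀ|² ≥ (p−1)² |∇²u|², where ∇²u is the Hessian and |·| the Frobenius norm. -/

import Mathlib

noncomputable section

/-- Partial derivative of `f` at `x` in the `j`-th coordinate direction. -/
def pd {n : ℕ} (j : Fin n) (f : (Fin n → ℝ) → ℝ) (x : Fin n → ℝ) : ℝ :=
  fderiv ℝ f x (Pi.single j 1)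

lemma matKey {n : ℕ} (A : Fin n → Fin n → ℝ) (ν v : Fin n → ℝ)
    (hN : ∑ i, (ν i)^2 = 1)
    (hv : ∀ j, ∑ i, ν i * A i j = v j)
    (hv' : ∀ i, ∑ j, A i j * ν j = v i) :
    2 * (∑ j, (v j)^2) - (∑ j, ν j * v j)^2 ≤ ∑ i, ∑ j, (A i j)^2 := by
  have hs : ∑ i, ν i * v i = ∑ j, ν j * v j := rfl
  set s : ℝ := ∑ j, ν j * v j with hsdef
  set b : ℝ := ∑ j, (v j)^2 with hbdef
  set X : Fin n → Fin n → ℝ := fun i j => ν i * v j + v i * ν j - s * (ν i * ν j) with hX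
  -- cross term
  have T1 : ∑ i, ∑ j, A i j * (ν i * v j) = b := by
    rw [Finset.sum_comm, hbdef]
    refine Finset.sum_congr rfl fun j _ => ?_
    calc ∑ i, A i j * (ν i * v j) = (∑ i, ν i * A i j) * v j := by
          rw [Finset.sum_mul]; exact Finset.sum_congr rfl fun i _ => by ring
      _ = (v j)^2 := by rw [hv j]; ring
  have T2 : ∑ i, ∑ j, A i j * (v i * ν j) = b := by
    rw [hbdef]
    refine Finset.sum_congr rfl fun i _ => ?_
    calc ∑ j, A i j * (v i * ν j) = v i * ∑ j, A i j * ν j := by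
          rw [Finset.mul_sum]; exact Finset.sum_congr rfl fun j _ => by ring
      _ = (v i)^2 := by rw [hv' i]; ring
  have T3 : ∑ i, ∑ j, A i j * (ν i * ν j) = s := by
    rw [hsdef]
    refine Finset.sum_congr rfl fun i _ => ?_
    calc ∑ j, A i j * (ν i * ν j) = ν i * ∑ j, A i j * ν j := by
          rw [Finset.mul_sum]; exact Finset.sum_congr rfl fun j _ => by ring
      _ = ν i * v i := by rw [hv' i]
  have cross : ∑ i, ∑ j, A i j * X i j = 2 * b - s^2 := by
    have : ∀ i, ∑ j, A i j * X i j
        = (∑ j, A i j * (ν i * v j)) + (∑ j, A i j * (v i * ν j))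
          - s * (∑ j, A i j * (ν i * ν j)) := by
      intro i
      rw [Finset.mul_sum, ← Finset.sum_add_distrib, ← Finset.sum_sub_distrib]
      exact Finset.sum_congr rfl fun j _ => by simp only [hX]; ring
    rw [Finset.sum_congr rfl fun i _ => this i, Finset.sum_sub_distrib,
      Finset.sum_add_distrib, T1, T2, ← Finset.mul_sum, T3]
    ring
  have sqX : ∑ i, ∑ j, (X i j)^2 = 2 * b - s^2 := by
    have inner : ∀ i, ∑ j, (X i j)^2 = (ν i)^2 * b + (v i)^2 - s^2 * (ν i)^2 := by
      intro i
      calc ∑ j, (X i j)^2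
          = ∑ j, ((ν i)^2 * (v j)^2
              + ((v i)^2 + s^2*(ν i)^2 - 2*s*(ν i * v i)) * (ν j)^2
              + (2*(ν i * v i) - 2*s*(ν i)^2) * (ν j * v j)) := by
            refine Finset.sum_congr rfl fun j _ => ?_; simp only [hX]; ring
        _ = (ν i)^2 * (∑ j, (v j)^2)
              + ((v i)^2 + s^2*(ν i)^2 - 2*s*(ν i * v i)) * (∑ j, (ν j)^2)
              + (2*(ν i * v i) - 2*s*(ν i)^2) * (∑ j, ν j * v j) := by
            rw [Finset.sum_add_distrib, Finset.sum_add_distrib,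
              ← Finset.mul_sum, ← Finset.mul_sum, ← Finset.mul_sum]
        _ = (ν i)^2 * b + (v i)^2 - s^2 * (ν i)^2 := by
            rw [hN, ← hsdef, ← hbdef]; ring
    rw [Finset.sum_congr rfl fun i _ => inner i, Finset.sum_sub_distrib,
      Finset.sum_add_distrib, ← Finset.sum_mul, ← Finset.mul_sum, hN, ← hbdef]
    ring
  have h0 : 0 ≤ ∑ i, ∑ j, (A i j - X i j)^2 :=
    Finset.sum_nonneg fun i _ => Finset.sum_nonneg fun j _ => sq_nonneg _
  have expand : ∑ i, ∑ j, (A i j - X i j)^2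
      = (∑ i, ∑ j, (A i j)^2) - 2 * (∑ i, ∑ j, A i j * X i j)
        + (∑ i, ∑ j, (X i j)^2) := by
    rw [Finset.mul_sum, ← Finset.sum_sub_distrib, ← Finset.sum_add_distrib]
    refine Finset.sum_congr rfl fun i _ => ?_
    rw [Finset.mul_sum, ← Finset.sum_sub_distrib, ← Finset.sum_add_distrib]
    exact Finset.sum_congr rfl fun j _ => by ring
  rw [expand, cross, sqX] at h0
  linarith

theorem stmt8 {n : ℕ} (hn : 2 ≤ n) (p : ℝ) (hp1 : 1 ≤ p) (hp2 : p < 2)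
    (Ω : Set (Fin n → ℝ)) (hΩ : IsOpen Ω)
    (u : (Fin n → ℝ) → ℝ) (hu : ContDiffOn ℝ 2 u Ω)
    (gn : (Fin n → ℝ) → ℝ)
    (hgn : ∀ y, gn y = Real.sqrt (∑ j, (pd j u y) ^ 2)) :
    ∀ x ∈ Ω, (∃ j, pd j u x ≠ 0) → DifferentiableAt ℝ gn x →
      (p - 1) ^ 2 * (∑ i, ∑ j, (pd i (fun y => pd j u y) x) ^ 2)
        ≤ (∑ i, ∑ j, (pd i (fun y => pd j u y) x) ^ 2)
          + 2 * (p - 2) * (∑ j, (pd j gn x) ^ 2)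
          + (p - 2) ^ 2 * (∑ j, (pd j u x / gn x) * pd j gn x) ^ 2 := by
  intro x hx hex _hdiff
  obtain ⟨j₀, hj₀⟩ := hex
  have hmem : Ω ∈ nhds x := hΩ.mem_nhds hx
  have hC2 : ContDiffAt ℝ 2 u x := hu.contDiffAt hmem
  have hfd : ContDiffAt ℝ 1 (fderiv ℝ u) x := hC2.fderiv_right (by norm_num)
  have hfdiff2 : DifferentiableAt ℝ (fderiv ℝ u) x := hfd.differentiableAt one_ne_zero
  have hdiffpd : ∀ i : Fin n, DifferentiableAt ℝ (fun y => pd i u y) x := fun i =>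
    ((hfd.clm_apply contDiffAt_const).differentiableAt one_ne_zero)
  -- second derivative identification
  have hpd_eq : ∀ i j : Fin n, pd i (fun y => pd j u y) x
      = fderiv ℝ (fderiv ℝ u) x (Pi.single i 1) (Pi.single j 1) := by
    intro i j
    have h1 : HasFDerivAt (fun y => pd j u y)
        ((ContinuousLinearMap.apply ℝ ℝ (Pi.single j 1 : Fin n → ℝ)).comp
          (fderiv ℝ (fderiv ℝ u) x)) x :=
      (ContinuousLinearMap.apply ℝ ℝ (Pi.single j 1 : Fin n → ℝ)).hasFDerivAt.comp x
        hfdiff2.hasFDerivAt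
    show fderiv ℝ (fun y => pd j u y) x (Pi.single i 1) = _
    rw [h1.fderiv]
    rfl
  have hsymm : IsSymmSndFDerivAt ℝ u x := hC2.isSymmSndFDerivAt (by simp)
  have hAsymm : ∀ i j : Fin n, pd i (fun y => pd j u y) x = pd j (fun y => pd i u y) x := by
    intro i j
    rw [hpd_eq, hpd_eq]
    exact hsymm _ _
  -- derivative of the squared gradient norm
  have hqd : HasFDerivAt (fun y => ∑ j, (pd j u y) ^ 2)
      (∑ j, (2 * pd j u x) • fderiv ℝ (fun y => pd j u y) x) x := by
    refine HasFDerivAt.fun_sum fun j _ => ?_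
    have h := (hdiffpd j).hasFDerivAt
    simpa only [pow_two, two_mul, add_smul] using h.fun_mul h
  have hqx : 0 < ∑ j, (pd j u x) ^ 2 :=
    Finset.sum_pos' (fun j _ => sq_nonneg _)
      ⟨j₀, Finset.mem_univ _, lt_of_le_of_ne (sq_nonneg _) (Ne.symm (pow_ne_zero 2 hj₀))⟩
  have hgneq : gn = fun y => Real.sqrt (∑ j, (pd j u y) ^ 2) := funext hgn
  have hgd : HasFDerivAt gn ((1 / (2 * Real.sqrt (∑ j, (pd j u x) ^ 2))) •
      (∑ j, (2 * pd j u x) • fderiv ℝ (fun y => pd j u y) x)) x := by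
    rw [hgneq]
    exact hqd.sqrt hqx.ne'
  have hgval : gn x = Real.sqrt (∑ j, (pd j u x) ^ 2) := hgn x
  have hgpos : 0 < gn x := by rw [hgval]; exact Real.sqrt_pos.2 hqx
  have hgsq : (gn x) ^ 2 = ∑ j, (pd j u x) ^ 2 := by
    rw [hgval]; exact Real.sq_sqrt hqx.le
  -- gradient of gn
  have hvj : ∀ j : Fin n, pd j gn x
      = ∑ i, (pd i u x / gn x) * pd j (fun y => pd i u y) x := by
    intro j
    show fderiv ℝ gn x (Pi.single j 1) = _
    rw [hgd.fderiv]
    simp only [ContinuousLinearMap.smul_apply, ContinuousLinearMap.sum_apply, smul_eq_mul,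
      Finset.mul_sum]
    refine Finset.sum_congr rfl fun i _ => ?_
    have hsne : Real.sqrt (∑ j, (pd j u x) ^ 2) ≠ 0 := (Real.sqrt_pos.2 hqx).ne'
    rw [hgval]
    show 1 / (2 * Real.sqrt (∑ j, (pd j u x) ^ 2)) * (2 * pd i u x *
        fderiv ℝ (fun y => pd i u y) x (Pi.single j 1))
      = pd i u x / Real.sqrt (∑ j, (pd j u x) ^ 2) *
        fderiv ℝ (fun y => pd i u y) x (Pi.single j 1)
    field_simp
  -- assemble
  have hN : ∑ i, (pd i u x / gn x) ^ 2 = 1 := by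
    have : ∑ i, (pd i u x / gn x) ^ 2 = (∑ i, (pd i u x) ^ 2) / (gn x) ^ 2 := by
      rw [Finset.sum_div]
      exact Finset.sum_congr rfl fun i _ => (div_pow _ _ _)
    rw [this, hgsq]
    exact div_self hqx.ne'
  have hv : ∀ j, ∑ i, (pd i u x / gn x) * pd i (fun y => pd j u y) x = pd j gn x := by
    intro j
    rw [hvj j]
    exact Finset.sum_congr rfl fun i _ => by rw [hAsymm i j]
  have hv' : ∀ i, ∑ j, pd i (fun y => pd j u y) x * (pd j u x / gn x) = pd i gn x := by
    intro i
    rw [hvj i]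
    exact Finset.sum_congr rfl fun j _ => mul_comm _ _
  have key := matKey (fun i j => pd i (fun y => pd j u y) x)
    (fun i => pd i u x / gn x) (fun j => pd j gn x) hN hv hv'
  have hCS : (∑ j, (pd j u x / gn x) * pd j gn x) ^ 2 ≤ ∑ j, (pd j gn x) ^ 2 := by
    have h := Finset.sum_mul_sq_le_sq_mul_sq Finset.univ
      (fun i => pd i u x / gn x) (fun j => pd j gn x)
    rwa [hN, one_mul] at h
  have hb0 : 0 ≤ ∑ j, (pd j gn x) ^ 2 := Finset.sum_nonneg fun j _ => sq_nonneg _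
  nlinarith [mul_nonneg (mul_nonneg (by linarith : (0:ℝ) ≤ 2 - p) (by linarith : (0:ℝ) ≤ p))
      (sub_nonneg.2 key),
    mul_nonneg (mul_nonneg (by linarith : (0:ℝ) ≤ 2 - p) (by linarith : (0:ℝ) ≤ p - 1))
      (sub_nonneg.2 hCS)]
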